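/- Suppose U ⊕ I_{X₀} = E (V ⊕ I_{Y₀}) F with E, F invertible. Then F maps ker U ⊕ {0} ⊆ X ⊕ X₀ bijectively onto ker V ⊕ {0} ⊆ Y ⊕ Y₀; in particular the restriction of F induces an isomorphism from ker U onto ker V. -/

import Mathlib

open ContinuousLinearMap

/-- 2×2 block operator matrix `[[A, B],[C, D]] : X ⊕ Y → X' ⊕ Y'`. -/
noncomputable def blk {X Y X' Y' : Type*} [NormedAddCommGroup X] [NormedSpace ℝ X]
    [NormedAddCommGroup Y] [NormedSpace ℝ Y] [NormedAddCommGroup X'] [NormedSpace ℝ X']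
    [NormedAddCommGroup Y'] [NormedSpace ℝ Y']
    (A : X →L[ℝ] X') (B : Y →L[ℝ] X') (C : X →L[ℝ] Y') (D : Y →L[ℝ] Y') :
    (X × Y) →L[ℝ] (X' × Y') :=
  (A.coprod B).prod (C.coprod D)

section blocks
variable {X Y X' Y' : Type*} [NormedAddCommGroup X] [NormedSpace ℝ X]
    [NormedAddCommGroup Y] [NormedSpace ℝ Y] [NormedAddCommGroup X'] [NormedSpace ℝ X']
    [NormedAddCommGroup Y'] [NormedSpace ℝ Y']

/-- (1,1)-entry of a block operator. -/
noncomputable def b11 (T : (X × Y) →L[ℝ] (X' × Y')) : X →L[ℝ] X' :=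
  (ContinuousLinearMap.fst ℝ X' Y').comp (T.comp (ContinuousLinearMap.inl ℝ X Y))

/-- (1,2)-entry of a block operator. -/
noncomputable def b12 (T : (X × Y) →L[ℝ] (X' × Y')) : Y →L[ℝ] X' :=
  (ContinuousLinearMap.fst ℝ X' Y').comp (T.comp (ContinuousLinearMap.inr ℝ X Y))

/-- (2,1)-entry of a block operator. -/
noncomputable def b21 (T : (X × Y) →L[ℝ] (X' × Y')) : X →L[ℝ] Y' :=
  (ContinuousLinearMap.snd ℝ X' Y').comp (T.comp (ContinuousLinearMap.inl ℝ X Y))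

/-- (2,2)-entry of a block operator. -/
noncomputable def b22 (T : (X × Y) →L[ℝ] (X' × Y')) : Y →L[ℝ] Y' :=
  (ContinuousLinearMap.snd ℝ X' Y').comp (T.comp (ContinuousLinearMap.inr ℝ X Y))

end blocks

/-- If `U ⊕ I = E (V ⊕ I) F` with `E, F` invertible, then `F` maps `ker U ⊕ {0}` bijectively
onto `ker V ⊕ {0}`, inducing an isomorphism from `ker U` onto `ker V`. -/
theorem stmt17 {X Y X₀ Y₀ : Type*} [NormedAddCommGroup X] [NormedSpace ℝ X] [CompleteSpace X]
    [NormedAddCommGroup Y] [NormedSpace ℝ Y] [CompleteSpace Y]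
    [NormedAddCommGroup X₀] [NormedSpace ℝ X₀] [CompleteSpace X₀]
    [NormedAddCommGroup Y₀] [NormedSpace ℝ Y₀] [CompleteSpace Y₀]
    (U : X →L[ℝ] X) (V : Y →L[ℝ] Y)
    (E : (Y × Y₀) →L[ℝ] (X × X₀)) (Einv : (X × X₀) →L[ℝ] (Y × Y₀))
    (F : (X × X₀) →L[ℝ] (Y × Y₀)) (Finv : (Y × Y₀) →L[ℝ] (X × X₀))
    (hE1 : E.comp Einv = ContinuousLinearMap.id ℝ (X × X₀))
    (hE2 : Einv.comp E = ContinuousLinearMap.id ℝ (Y × Y₀))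
    (hF1 : F.comp Finv = ContinuousLinearMap.id ℝ (Y × Y₀))
    (hF2 : Finv.comp F = ContinuousLinearMap.id ℝ (X × X₀))
    (hEq : blk U 0 0 (ContinuousLinearMap.id ℝ X₀) =
      E.comp ((blk V 0 0 (ContinuousLinearMap.id ℝ Y₀)).comp F)) :
    Set.BijOn F (((LinearMap.ker (U : X →ₗ[ℝ] X)).prod (⊥ : Submodule ℝ X₀) : Submodule ℝ (X × X₀)) : Set (X × X₀))
      (((LinearMap.ker (V : Y →ₗ[ℝ] Y)).prod (⊥ : Submodule ℝ Y₀) : Submodule ℝ (Y × Y₀)) : Set (Y × Y₀)) ∧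
    ∃ g : ↥(LinearMap.ker (U : X →ₗ[ℝ] X)) ≃L[ℝ] ↥(LinearMap.ker (V : Y →ₗ[ℝ] Y)),
      ∀ x : ↥(LinearMap.ker (U : X →ₗ[ℝ] X)), (g x : Y) = (F ((x : X), 0)).1 := by
  have hFinvF : ∀ p : X × X₀, Finv (F p) = p := fun p => by
    have := ContinuousLinearMap.ext_iff.mp hF2 p
    simpa using this
  have hFFinv : ∀ q : Y × Y₀, F (Finv q) = q := fun q => by
    have := ContinuousLinearMap.ext_iff.mp hF1 q
    simpa using this
  have hEinvE : ∀ q : Y × Y₀, Einv (E q) = q := fun q => by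
    have := ContinuousLinearMap.ext_iff.mp hE2 q
    simpa using this
  have happB : ∀ p : X × X₀, blk U 0 0 (ContinuousLinearMap.id ℝ X₀) p = (U p.1, p.2) := by
    intro p; simp [blk]
  have happB' : ∀ q : Y × Y₀, blk V 0 0 (ContinuousLinearMap.id ℝ Y₀) q = (V q.1, q.2) := by
    intro q; simp [blk]
  have hEqApp : ∀ p : X × X₀, (U p.1, p.2) =
      E (V (F p).1, (F p).2) := by
    intro p
    have := ContinuousLinearMap.ext_iff.mp hEq p
    simpa [happB, happB'] using this
  have hfwd : ∀ p : X × X₀, U p.1 = 0 → p.2 = 0 → V (F p).1 = 0 ∧ (F p).2 = 0 := by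
    intro p h1 h2
    have h3 : E (V (F p).1, (F p).2) = 0 := by rw [← hEqApp p, h1, h2]; rfl
    have h4 : (V (F p).1, (F p).2) = (0 : Y × Y₀) := by
      have := hEinvE (V (F p).1, (F p).2)
      rw [h3] at this
      simpa using this.symm
    exact ⟨congrArg Prod.fst h4, congrArg Prod.snd h4⟩
  have hbwd : ∀ q : Y × Y₀, V q.1 = 0 → q.2 = 0 → U (Finv q).1 = 0 ∧ (Finv q).2 = 0 := by
    intro q h1 h2
    have h3 : (U (Finv q).1, (Finv q).2) = (0 : X × X₀) := by
      rw [hEqApp (Finv q), hFFinv q, h1, h2]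
      exact map_zero E
    exact ⟨congrArg Prod.fst h3, congrArg Prod.snd h3⟩
  have hmemU : ∀ p : X × X₀,
      p ∈ (((LinearMap.ker (U : X →ₗ[ℝ] X)).prod (⊥ : Submodule ℝ X₀) : Submodule ℝ (X × X₀)) : Set (X × X₀))
        ↔ U p.1 = 0 ∧ p.2 = 0 := by
    intro p; rw [SetLike.mem_coe, Submodule.mem_prod]; simp [LinearMap.mem_ker]
  have hmemV : ∀ q : Y × Y₀,
      q ∈ (((LinearMap.ker (V : Y →ₗ[ℝ] Y)).prod (⊥ : Submodule ℝ Y₀) : Submodule ℝ (Y × Y₀)) : Set (Y × Y₀))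
        ↔ V q.1 = 0 ∧ q.2 = 0 := by
    intro q; rw [SetLike.mem_coe, Submodule.mem_prod]; simp [LinearMap.mem_ker]
  have hmapsF : Set.MapsTo F
      (((LinearMap.ker (U : X →ₗ[ℝ] X)).prod (⊥ : Submodule ℝ X₀) : Submodule ℝ (X × X₀)) : Set (X × X₀))
      (((LinearMap.ker (V : Y →ₗ[ℝ] Y)).prod (⊥ : Submodule ℝ Y₀) : Submodule ℝ (Y × Y₀)) : Set (Y × Y₀)) := by
    intro p hp
    rw [hmemU] at hp
    rw [hmemV]
    exact hfwd p hp.1 hp.2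
  have hmapsFinv : Set.MapsTo Finv
      (((LinearMap.ker (V : Y →ₗ[ℝ] Y)).prod (⊥ : Submodule ℝ Y₀) : Submodule ℝ (Y × Y₀)) : Set (Y × Y₀))
      (((LinearMap.ker (U : X →ₗ[ℝ] X)).prod (⊥ : Submodule ℝ X₀) : Submodule ℝ (X × X₀)) : Set (X × X₀)) := by
    intro q hq
    rw [hmemV] at hq
    rw [hmemU]
    exact hbwd q hq.1 hq.2
  have hbij : Set.BijOn F _ _ :=
    Set.InvOn.bijOn ⟨fun p _ => hFinvF p, fun q _ => hFFinv q⟩ hmapsF hmapsFinv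
  refine ⟨hbij, ?_⟩
  -- construct the isomorphism
  have hmemf : ∀ x : ↥(LinearMap.ker (U : X →ₗ[ℝ] X)), (F ((x : X), 0)).1 ∈ LinearMap.ker (V : Y →ₗ[ℝ] Y) := by
    intro x
    exact LinearMap.mem_ker.mpr (hfwd ((x : X), 0) (LinearMap.mem_ker.mp x.2) rfl).1
  have hmemg : ∀ y : ↥(LinearMap.ker (V : Y →ₗ[ℝ] Y)), (Finv ((y : Y), 0)).1 ∈ LinearMap.ker (U : X →ₗ[ℝ] X) := by
    intro y
    exact LinearMap.mem_ker.mpr (hbwd ((y : Y), 0) (LinearMap.mem_ker.mp y.2) rfl).1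
  let fA : ↥(LinearMap.ker (U : X →ₗ[ℝ] X)) →L[ℝ] ↥(LinearMap.ker (V : Y →ₗ[ℝ] Y)) :=
    ContinuousLinearMap.codRestrict
      ((ContinuousLinearMap.fst ℝ Y Y₀).comp
        (F.comp ((ContinuousLinearMap.inl ℝ X X₀).comp (LinearMap.ker (U : X →ₗ[ℝ] X)).subtypeL)))
      (LinearMap.ker (V : Y →ₗ[ℝ] Y)) (fun x => hmemf x)
  let gA : ↥(LinearMap.ker (V : Y →ₗ[ℝ] Y)) →L[ℝ] ↥(LinearMap.ker (U : X →ₗ[ℝ] X)) :=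
    ContinuousLinearMap.codRestrict
      ((ContinuousLinearMap.fst ℝ X X₀).comp
        (Finv.comp ((ContinuousLinearMap.inl ℝ Y Y₀).comp (LinearMap.ker (V : Y →ₗ[ℝ] Y)).subtypeL)))
      (LinearMap.ker (U : X →ₗ[ℝ] X)) (fun y => hmemg y)
  have hfA : ∀ x : ↥(LinearMap.ker (U : X →ₗ[ℝ] X)), (fA x : Y) = (F ((x : X), 0)).1 := fun x => rfl
  have hgA : ∀ y : ↥(LinearMap.ker (V : Y →ₗ[ℝ] Y)), (gA y : X) = (Finv ((y : Y), 0)).1 := fun y => rfl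
  have h1 : ∀ x, gA (fA x) = x := by
    intro x
    apply Subtype.ext
    rw [hgA, hfA]
    have h2 : ((F ((x : X), 0)).1, (0 : Y₀)) = F ((x : X), 0) := by
      have := (hfwd ((x : X), 0) (LinearMap.mem_ker.mp x.2) rfl).2
      exact Prod.ext rfl this.symm
    rw [h2, hFinvF]
  have h2 : ∀ y, fA (gA y) = y := by
    intro y
    apply Subtype.ext
    rw [hfA, hgA]
    have h3 : ((Finv ((y : Y), 0)).1, (0 : X₀)) = Finv ((y : Y), 0) := by
      have := (hbwd ((y : Y), 0) (LinearMap.mem_ker.mp y.2) rfl).2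
      exact Prod.ext rfl this.symm
    rw [h3, hFFinv]
  exact ⟨ContinuousLinearEquiv.equivOfInverse fA gA h1 h2, fun x => rfl⟩
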